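/- arXiv:2310.00756 — 2 statements merged into one kernel-verified Lean document; each statement's English description precedes it below -/
import Mathlib

section
/- Let a, b, τ, χ > 0 and λ ≤ 0. Define μ₋ = [-(1-(1+τ)λ+aτ) - √((1-(1+τ)λ+aτ)² - 4τ((a-λ)(1-λ)+χaλ/b))]/(2τ), interpreted as a complex number when the discriminant is negative. Then Re(μ₋) < 0. -/
lemma sqrt_re_nonneg (z : ℂ) : 0 ≤ (z ^ ((1 : ℂ)/2)).re := by
  rcases eq_or_ne z 0 with hz | hz
  · simp [hz, Complex.zero_cpow (by norm_num : (1:ℂ)/2 ≠ 0)]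
  · rw [Complex.cpow_def_of_ne_zero hz, Complex.exp_re]
    have him : (Complex.log z * ((1:ℂ)/2)).im = z.arg / 2 := by
      simp [Complex.log_im]; ring
    rw [him]
    have h1 : -(Real.pi) ≤ z.arg := Complex.neg_pi_lt_arg z |>.le
    have h2 : z.arg ≤ Real.pi := Complex.arg_le_pi z
    have : 0 ≤ Real.cos (z.arg / 2) := by
      apply Real.cos_nonneg_of_mem_Icc
      constructor <;> [linarith; linarith]
    positivity

theorem mu_minus_re_neg (a b tau chi lam : ℝ) (ha : 0 < a) (hb : 0 < b)
    (htau : 0 < tau) (hchi : 0 < chi) (hlam : lam ≤ 0) :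
    ((-( ((1 - (1 + tau) * lam + a * tau : ℝ) : ℂ))
        - (((1 - (1 + tau) * lam + a * tau) ^ 2
            - 4 * tau * ((a - lam) * (1 - lam) + chi * a * lam / b) : ℝ) : ℂ) ^ ((1 : ℂ) / 2))
      / (2 * (tau : ℂ))).re < 0 := by
  set B : ℝ := 1 - (1 + tau) * lam + a * tau with hB
  have hBpos : 0 < B := by nlinarith
  set d : ℝ := B ^ 2 - 4 * tau * ((a - lam) * (1 - lam) + chi * a * lam / b) with hd
  have hre : 0 ≤ ((d : ℂ) ^ ((1 : ℂ)/2)).re := sqrt_re_nonneg _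
  have hden : (2 * (tau : ℂ)) = ((2 * tau : ℝ) : ℂ) := by push_cast; ring
  rw [hden, Complex.div_ofReal_re]
  have hnum : ((-(B : ℂ) - (d : ℂ) ^ ((1 : ℂ)/2)).re) = -B - ((d : ℂ) ^ ((1 : ℂ)/2)).re := by
    simp
  rw [hnum]
  apply div_neg_of_neg_of_pos
  · linarith
  · linarith
end

section
/- Let a, b, χ > 0 with b > 2χ, and let ū ≥ u̲ ≥ 0 be real numbers satisfying ū ≤ max(a - χu̲, 0)/(b-χ) and u̲ ≥ (a - χū)/(b-χ). Then ū = u̲ = a/b. -/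
theorem squeeze_to_constant (a b chi ubar ulow : ℝ) (ha : 0 < a) (hb : 0 < b)
    (hchi : 0 < chi) (hb2 : b > 2 * chi)
    (h1 : ulow ≤ ubar) (h2 : 0 ≤ ulow)
    (h3 : ubar ≤ max (a - chi * ulow) 0 / (b - chi))
    (h4 : ulow ≥ (a - chi * ubar) / (b - chi)) :
    ubar = a / b ∧ ulow = a / b := by
  have hbc : (0:ℝ) < b - chi := by linarith
  have h4' : (b - chi) * ulow ≥ a - chi * ubar := by
    have := (div_le_iff₀ hbc).mp h4
    linarith
  rcases le_or_gt (a - chi * ulow) 0 with hc | hc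
  · -- then max = 0, ubar ≤ 0, contradiction with h4'
    rw [max_eq_right hc] at h3
    simp at h3
    have hub0 : ubar = 0 := le_antisymm h3 (le_trans h2 h1)
    nlinarith
  · rw [max_eq_left hc.le] at h3
    have h3' : (b - chi) * ubar ≤ a - chi * ulow := by
      have := (le_div_iff₀ hbc).mp h3
      linarith
    have heq : ubar = ulow := by nlinarith
    constructor <;> [skip; skip] <;>
      · rw [eq_div_iff hb.ne']
        nlinarith
end
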